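/- (Theorem 2, plug-in converse part.) There exist constants c > 0, ε₀ > 0, and S₀ such that for all S ≥ S₀ and all n ≤ c · S², the empirical (plug-in) mutual information satisfies sup over all joint pmfs P on [S]×[S] of E_{Z^n ~ P^{⊗n}}[(I(P̂_n) − I(P))²] ≥ ε₀. That is, the worst-case sample complexity required for the empirical mutual information to be consistent is Ω(S²). -/

import Mathlib

/-- Shannon entropy of a pmf `P` on a finite alphabet, with natural logarithm and the
convention `0 ln 0 = 0`. -/
noncomputable def entropy {A : Type*} [Fintype A] (P : A → ℝ) : ℝ :=
  ∑ a, -(P a * Real.log (P a))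

/-- Mutual information of a joint pmf `P` on `A × B`: `I(P) = H(P1) + H(P2) − H(P)`. -/
noncomputable def mutualInfo {A B : Type*} [Fintype A] [Fintype B] (P : A × B → ℝ) : ℝ :=
  entropy (fun a => ∑ b, P (a, b)) + entropy (fun b => ∑ a, P (a, b)) - entropy P

/-- Expectation of `f(Z^n)` when `Z^n = (Z_1,…,Z_n)` is drawn i.i.d. from the pmf `P`. -/
noncomputable def expectIID {A : Type*} [Fintype A] {n : ℕ} (P : A → ℝ)
    (f : (Fin n → A) → ℝ) : ℝ :=
  ∑ z : Fin n → A, (∏ k, P (z k)) * f z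

/-- `P` is a probability mass function on the finite alphabet `A`. -/
def IsPmf {A : Type*} [Fintype A] (P : A → ℝ) : Prop :=
  (∀ a, 0 ≤ P a) ∧ ∑ a, P a = 1

/-- Empirical distribution of the sample `z = (z_1,…,z_n)`:
`P̂_n(a) = (1/n) Σ_{k=1}^n 1{z_k = a}`. -/
noncomputable def empDist {A : Type*} [Fintype A] [DecidableEq A] {n : ℕ}
    (z : Fin n → A) : A → ℝ :=
  fun a => (∑ k, if z k = a then (1 : ℝ) else 0) / n

open Finset Real
set_option linter.unusedSectionVars false
set_option maxHeartbeats 1000000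

section Basic

variable {A : Type*} [Fintype A] {n : ℕ} {P : A → ℝ}

lemma sum_prod_pmf (hP : ∑ a, P a = 1) :
    ∑ z : Fin n → A, ∏ k, P (z k) = 1 := by
  rw [← Fintype.sum_pow, hP, one_pow]

lemma prod_nonneg' (h0 : ∀ a, 0 ≤ P a) (z : Fin n → A) : 0 ≤ ∏ k, P (z k) :=
  Finset.prod_nonneg fun _ _ => h0 _

lemma expect_ge (hP : IsPmf P) {f : (Fin n → A) → ℝ} {c : ℝ}
    (h : ∀ z, (∏ k, P (z k)) ≠ 0 → c ≤ f z) : c ≤ expectIID P f := by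
  have h1 : (c : ℝ) = ∑ z : Fin n → A, (∏ k, P (z k)) * c := by
    rw [← Finset.sum_mul, sum_prod_pmf hP.2, one_mul]
  rw [h1, expectIID]
  refine Finset.sum_le_sum fun z _ => ?_
  rcases eq_or_ne (∏ k, P (z k)) 0 with h0 | h0
  · simp [h0]
  · exact mul_le_mul_of_nonneg_left (h z h0) (prod_nonneg' hP.1 z)

lemma expect_le (hP : IsPmf P) {f : (Fin n → A) → ℝ} {c : ℝ}
    (h : ∀ z, f z ≤ c) : expectIID P f ≤ c := by
  have h1 : (c : ℝ) = ∑ z : Fin n → A, (∏ k, P (z k)) * c := by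
    rw [← Finset.sum_mul, sum_prod_pmf hP.2, one_mul]
  rw [h1, expectIID]
  exact Finset.sum_le_sum fun z _ =>
    mul_le_mul_of_nonneg_left (h z) (prod_nonneg' hP.1 z)

lemma expect_mono (hP : IsPmf P) {f g : (Fin n → A) → ℝ}
    (h : ∀ z, f z ≤ g z) : expectIID P f ≤ expectIID P g :=
  Finset.sum_le_sum fun z _ => mul_le_mul_of_nonneg_left (h z) (prod_nonneg' hP.1 z)

lemma expect_sq_le (hP : IsPmf P) (f : (Fin n → A) → ℝ) :
    (expectIID P f) ^ 2 ≤ expectIID P (fun z => (f z) ^ 2) := by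
  have := Finset.sum_sq_le_sum_mul_sum_of_sq_eq_mul (Finset.univ : Finset (Fin n → A))
    (f := fun z => ∏ k, P (z k)) (g := fun z => (∏ k, P (z k)) * (f z) ^ 2)
    (r := fun z => (∏ k, P (z k)) * f z)
    (fun z _ => prod_nonneg' hP.1 z)
    (fun z _ => mul_nonneg (prod_nonneg' hP.1 z) (sq_nonneg _))
    (fun z _ => by ring)
  calc (expectIID P f) ^ 2 ≤ 1 * expectIID P (fun z => (f z) ^ 2) := by
        simpa [expectIID, sum_prod_pmf hP.2] using this
    _ = _ := one_mul _

end Basic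

section Lin
variable {A : Type*} [Fintype A] [DecidableEq A] {n : ℕ} {P : A → ℝ}

lemma expect_sum {B : Type*} [Fintype B] (f : B → (Fin n → A) → ℝ) :
    expectIID P (fun z => ∑ b, f b z) = ∑ b, expectIID P (f b) := by
  simp only [expectIID, Finset.mul_sum]
  exact Finset.sum_comm

lemma expect_const_mul (c : ℝ) (f : (Fin n → A) → ℝ) :
    expectIID P (fun z => c * f z) = c * expectIID P f := by
  simp only [expectIID, Finset.mul_sum]
  exact Finset.sum_congr rfl fun z _ => by ring

lemma expect_add (f g : (Fin n → A) → ℝ) :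
    expectIID P (fun z => f z + g z) = expectIID P f + expectIID P g := by
  unfold expectIID
  rw [← Finset.sum_add_distrib]
  exact Finset.sum_congr rfl fun z _ => by ring

lemma expect_sub (f g : (Fin n → A) → ℝ) :
    expectIID P (fun z => f z - g z) = expectIID P f - expectIID P g := by
  unfold expectIID
  rw [← Finset.sum_sub_distrib]
  exact Finset.sum_congr rfl fun z _ => by ring

lemma expect_const (hP : ∑ a, P a = 1) (c : ℝ) :
    expectIID P (fun _ : Fin n → A => c) = c := by
  rw [expectIID, ← Finset.sum_mul, ← Fintype.sum_pow, hP, one_pow, one_mul]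

lemma expect_pair (hP : ∑ a, P a = 1) {k l : Fin n} (hkl : k ≠ l) (g h : A → ℝ) :
    expectIID P (fun z => g (z k) * h (z l))
      = (∑ a, P a * g a) * (∑ a, P a * h a) := by
  have key : ∀ z : Fin n → A, (∏ j, P (z j)) * (g (z k) * h (z l))
      = ∏ j, (P (z j) * (if j = k then g (z j) else if j = l then h (z j) else 1)) := by
    intro z
    rw [Finset.prod_mul_distrib]
    congr 1
    have hsub : ({k, l} : Finset (Fin n)) ⊆ Finset.univ := Finset.subset_univ _
    rw [← Finset.prod_subset hsub (fun j _ hj => ?_), Finset.prod_pair hkl]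
    · simp [hkl, Ne.symm hkl]
    · simp only [Finset.mem_insert, Finset.mem_singleton] at hj
      push_neg at hj
      simp [hj.1, hj.2]
  calc expectIID P (fun z => g (z k) * h (z l))
      = ∑ z : Fin n → A, ∏ j, (P (z j) * (if j = k then g (z j) else if j = l then h (z j) else 1)) := by
        rw [expectIID]; exact Finset.sum_congr rfl fun z _ => key z
    _ = ∏ j, ∑ a, (P a * (if j = k then g a else if j = l then h a else 1)) := by
        rw [Fintype.prod_sum (f := fun j a => P a * (if j = k then g a else if j = l then h a else 1))]
    _ = ∏ j, (if j = k then ∑ a, P a * g a else if j = l then ∑ a, P a * h a else 1) := by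
        refine Finset.prod_congr rfl fun j _ => ?_
        split_ifs with h1 h2 <;> simp [hP, Finset.sum_congr]
    _ = (∑ a, P a * g a) * (∑ a, P a * h a) := by
        have hsub : ({k, l} : Finset (Fin n)) ⊆ Finset.univ := Finset.subset_univ _
        rw [← Finset.prod_subset hsub (fun j _ hj => ?_), Finset.prod_pair hkl]
        · simp [hkl, Ne.symm hkl]
        · simp only [Finset.mem_insert, Finset.mem_singleton] at hj
          push_neg at hj
          simp [hj.1, hj.2]

end Lin

section MI
variable {A B : Type*} [Fintype A] [Fintype B]

lemma entropy_marg1 (e : A × B → ℝ) :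
    entropy (fun a => ∑ b, e (a, b)) = ∑ p : A × B, -(e p * Real.log (∑ b, e (p.1, b))) := by
  rw [entropy, Fintype.sum_prod_type]
  refine Finset.sum_congr rfl fun a _ => ?_
  rw [Finset.sum_mul, ← Finset.sum_neg_distrib]

lemma entropy_marg2 (e : A × B → ℝ) :
    entropy (fun b => ∑ a, e (a, b)) = ∑ p : A × B, -(e p * Real.log (∑ a, e (a, p.2))) := by
  rw [entropy, Fintype.sum_prod_type_right]
  refine Finset.sum_congr rfl fun b _ => ?_
  rw [Finset.sum_mul, ← Finset.sum_neg_distrib]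

lemma mutualInfo_eq_sum (e : A × B → ℝ) :
    mutualInfo e = ∑ p : A × B,
      (e p * Real.log (e p) - e p * Real.log (∑ b, e (p.1, b))
        - e p * Real.log (∑ a, e (a, p.2))) := by
  rw [mutualInfo, entropy_marg1, entropy_marg2, entropy, ← Finset.sum_add_distrib,
    ← Finset.sum_sub_distrib]
  exact Finset.sum_congr rfl fun p _ => by ring

lemma mutualInfo_ge_one_sub (e : A × B → ℝ) (he : ∀ p, 0 ≤ e p) (h1 : ∑ p, e p = 1) :
    1 - (∑ p : A × B, if 0 < e p then (∑ b, e (p.1, b)) * (∑ a, e (a, p.2)) else 0)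
      ≤ mutualInfo e := by
  rw [mutualInfo_eq_sum]
  have key : ∀ p : A × B,
      (if 0 < e p then e p else 0) - (if 0 < e p then (∑ b, e (p.1, b)) * (∑ a, e (a, p.2)) else 0)
      ≤ e p * Real.log (e p) - e p * Real.log (∑ b, e (p.1, b))
        - e p * Real.log (∑ a, e (a, p.2)) := by
    intro p
    by_cases hp : 0 < e p
    · simp only [hp, if_pos]
      have h1p : 0 < ∑ b, e (p.1, b) := by
        refine lt_of_lt_of_le hp ?_
        have := Finset.single_le_sum (f := fun b => e (p.1, b))
          (fun b _ => he _) (Finset.mem_univ p.2)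
        simpa using this
      have h2p : 0 < ∑ a, e (a, p.2) := by
        refine lt_of_lt_of_le hp ?_
        have := Finset.single_le_sum (f := fun a => e (a, p.2))
          (fun a _ => he _) (Finset.mem_univ p.1)
        simpa using this
      have hlog : Real.log ((∑ b, e (p.1, b)) * (∑ a, e (a, p.2)) / e p)
          ≤ (∑ b, e (p.1, b)) * (∑ a, e (a, p.2)) / e p - 1 :=
        Real.log_le_sub_one_of_pos (by positivity)
      have hlogeq : Real.log ((∑ b, e (p.1, b)) * (∑ a, e (a, p.2)) / e p)
          = Real.log (∑ b, e (p.1, b)) + Real.log (∑ a, e (a, p.2)) - Real.log (e p) := by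
        rw [Real.log_div (by positivity) (ne_of_gt hp), Real.log_mul (ne_of_gt h1p) (ne_of_gt h2p)]
      rw [hlogeq] at hlog
      have := mul_le_mul_of_nonneg_left hlog (le_of_lt hp)
      have hne : e p ≠ 0 := ne_of_gt hp
      have hdiv : e p * ((∑ b, e (p.1, b)) * (∑ a, e (a, p.2)) / e p - 1)
          = (∑ b, e (p.1, b)) * (∑ a, e (a, p.2)) - e p := by
        field_simp
      rw [hdiv] at this
      nlinarith [this]
    · have h0 : e p = 0 := le_antisymm (not_lt.mp hp) (he p)
      simp [hp, h0]
  calc 1 - (∑ p : A × B, if 0 < e p then (∑ b, e (p.1, b)) * (∑ a, e (a, p.2)) else 0)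
      = ∑ p : A × B, ((if 0 < e p then e p else 0)
          - (if 0 < e p then (∑ b, e (p.1, b)) * (∑ a, e (a, p.2)) else 0)) := by
        rw [Finset.sum_sub_distrib]
        congr 1
        rw [← h1]
        exact Finset.sum_congr rfl fun p _ => by
          by_cases hp : 0 < e p
          · simp [hp]
          · simp [hp, le_antisymm (not_lt.mp hp) (he p)]
    _ ≤ _ := Finset.sum_le_sum fun p _ => key p

lemma R_bound {n : ℕ} (hn : 0 < n) (e : A × B → ℝ) (he : ∀ p, 0 ≤ e p)
    (hatom : ∀ p, 0 < e p → (1 : ℝ) / n ≤ e p) (h1 : ∑ p, e p = 1) :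
    (∑ p : A × B, if 0 < e p then (∑ b, e (p.1, b)) * (∑ a, e (a, p.2)) else 0)
      ≤ Real.sqrt n * ((∑ a, (∑ b, e (a, b)) ^ 2) + (∑ b, (∑ a, e (a, b)) ^ 2)) / 2 := by
  set X := ∑ a, (∑ b, e (a, b)) ^ 2 with hX
  set Y := ∑ b, (∑ a, e (a, b)) ^ 2 with hY
  set R := ∑ p : A × B, if 0 < e p then (∑ b, e (p.1, b)) * (∑ a, e (a, p.2)) else 0 with hR
  have hXnn : 0 ≤ X := Finset.sum_nonneg fun a _ => sq_nonneg _
  have hYnn : 0 ≤ Y := Finset.sum_nonneg fun b _ => sq_nonneg _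
  have hRnn : 0 ≤ R := Finset.sum_nonneg fun p _ => by
    split_ifs
    · exact mul_nonneg (Finset.sum_nonneg fun b _ => he _) (Finset.sum_nonneg fun a _ => he _)
    · exact le_refl 0
  have hCS : R ^ 2 ≤ (∑ p : A × B, if 0 < e p then (1 : ℝ) else 0)
      * (∑ p : A × B, if 0 < e p then ((∑ b, e (p.1, b)) * (∑ a, e (a, p.2))) ^ 2 else 0) := by
    refine Finset.sum_sq_le_sum_mul_sum_of_sq_eq_mul Finset.univ
      (fun p _ => by split_ifs <;> norm_num)
      (fun p _ => by split_ifs with h; exacts [sq_nonneg _, le_rfl])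
      (fun p _ => by split_ifs <;> ring)
  have hsupp : (∑ p : A × B, if 0 < e p then (1 : ℝ) else 0) ≤ n := by
    calc (∑ p : A × B, if 0 < e p then (1 : ℝ) else 0) ≤ ∑ p : A × B, n * e p := by
          refine Finset.sum_le_sum fun p _ => ?_
          split_ifs with hp
          · have hnn : (0:ℝ) < n := by exact_mod_cast hn
            have := hatom p hp
            rw [div_le_iff₀ hnn] at this
            linarith [this]
          · exact mul_nonneg (Nat.cast_nonneg n) (he p)
      _ = n := by rw [← Finset.mul_sum, h1, mul_one]
  have hsq : (∑ p : A × B, if 0 < e p then ((∑ b, e (p.1, b)) * (∑ a, e (a, p.2))) ^ 2 else 0)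
      ≤ X * Y := by
    calc (∑ p : A × B, if 0 < e p then ((∑ b, e (p.1, b)) * (∑ a, e (a, p.2))) ^ 2 else 0)
        ≤ ∑ p : A × B, ((∑ b, e (p.1, b)) * (∑ a, e (a, p.2))) ^ 2 := by
          refine Finset.sum_le_sum fun p _ => ?_
          split_ifs
          · exact le_refl _
          · exact sq_nonneg _
      _ = X * Y := by
          rw [hX, hY, Finset.sum_mul_sum]
          rw [Fintype.sum_prod_type]
          exact Finset.sum_congr rfl fun a _ => Finset.sum_congr rfl fun b _ => by ring
  have hR2 : R ^ 2 ≤ (n : ℝ) * ((X + Y) / 2) ^ 2 := by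
    have hXY : X * Y ≤ ((X + Y) / 2) ^ 2 := by nlinarith [sq_nonneg (X - Y)]
    have h2 : R ^ 2 ≤ (n : ℝ) * (X * Y) := by
      calc R ^ 2 ≤ _ := hCS
        _ ≤ (n : ℝ) * (X * Y) := by
          refine mul_le_mul hsupp hsq (Finset.sum_nonneg fun p _ => ?_) (Nat.cast_nonneg n)
          split_ifs
          · exact sq_nonneg _
          · exact le_refl 0
    nlinarith [Nat.cast_nonneg (α := ℝ) n]
  have hrhs : (0:ℝ) ≤ Real.sqrt n * ((X + Y) / 2) := by positivity
  have : R = Real.sqrt (R ^ 2) := (Real.sqrt_sq hRnn).symm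
  rw [this]
  calc Real.sqrt (R ^ 2) ≤ Real.sqrt ((n : ℝ) * ((X + Y) / 2) ^ 2) := Real.sqrt_le_sqrt hR2
    _ = Real.sqrt n * ((X + Y) / 2) := by
        rw [Real.sqrt_mul (Nat.cast_nonneg n), Real.sqrt_sq (by positivity)]
    _ = Real.sqrt n * (X + Y) / 2 := by ring

end MI

section Emp
variable {A : Type*} [Fintype A] [DecidableEq A] {n : ℕ}

lemma empDist_nonneg (z : Fin n → A) (a : A) : 0 ≤ empDist z a := by
  apply div_nonneg _ (Nat.cast_nonneg n)
  exact Finset.sum_nonneg fun k _ => by split_ifs <;> norm_num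

lemma sum_empDist (hn : n ≠ 0) (z : Fin n → A) : ∑ a, empDist z a = 1 := by
  unfold empDist
  rw [← Finset.sum_div, Finset.sum_comm]
  have : ∀ k : Fin n, ∑ a, (if z k = a then (1:ℝ) else 0) = 1 := by
    intro k; simp
  rw [Finset.sum_congr rfl fun k _ => this k, Finset.sum_const, Finset.card_univ,
    Fintype.card_fin, nsmul_eq_mul, mul_one]
  field_simp

lemma empDist_le_one (hn : n ≠ 0) (z : Fin n → A) (a : A) : empDist z a ≤ 1 := by
  rw [← sum_empDist hn z]
  exact Finset.single_le_sum (fun b _ => empDist_nonneg z b) (Finset.mem_univ a)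

lemma empDist_atom (hn : n ≠ 0) (z : Fin n → A) (a : A) (h : 0 < empDist z a) :
    (1 : ℝ) / n ≤ empDist z a := by
  have hnum : (∑ k, if z k = a then (1:ℝ) else 0) = ((Finset.univ.filter fun k => z k = a).card : ℝ) := by
    rw [Finset.sum_boole]
  unfold empDist at h ⊢
  rw [hnum] at h ⊢
  have hpos : (0:ℝ) < n := by positivity
  have hcard : 0 < (Finset.univ.filter fun k => z k = a).card := by
    by_contra hc
    push_neg at hc
    have : (Finset.univ.filter fun k => z k = a).card = 0 := Nat.le_zero.mp hc
    rw [this] at h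
    simp at h
  have : (1:ℝ) ≤ ((Finset.univ.filter fun k => z k = a).card : ℝ) := by exact_mod_cast hcard
  gcongr

lemma marg1_empDist {B C : Type*} [Fintype B] [Fintype C] [DecidableEq B] [DecidableEq C]
    (z : Fin n → B × C) (x : B) :
    ∑ y, empDist z (x, y) = (∑ k, if (z k).1 = x then (1:ℝ) else 0) / n := by
  unfold empDist
  rw [← Finset.sum_div, Finset.sum_comm]
  congr 1
  refine Finset.sum_congr rfl fun k _ => ?_
  obtain ⟨p, q⟩ := z k
  by_cases hp : p = x
  · subst hp
    simp [Prod.ext_iff]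
  · simp [Prod.ext_iff, hp]

lemma marg2_empDist {B C : Type*} [Fintype B] [Fintype C] [DecidableEq B] [DecidableEq C]
    (z : Fin n → B × C) (y : C) :
    ∑ x, empDist z (x, y) = (∑ k, if (z k).2 = y then (1:ℝ) else 0) / n := by
  unfold empDist
  rw [← Finset.sum_div, Finset.sum_comm]
  congr 1
  refine Finset.sum_congr rfl fun k _ => ?_
  obtain ⟨p, q⟩ := z k
  by_cases hq : q = y
  · subst hq
    simp [Prod.ext_iff]
  · simp [Prod.ext_iff, hq]

end Emp

section ExpCount
variable {A B : Type*} [Fintype A] [Fintype B] [DecidableEq A] [DecidableEq B] {n : ℕ}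

lemma sum_indicator_pair (v : A → B) (a b : A) :
    ∑ x : B, (if v a = x then (1:ℝ) else 0) * (if v b = x then 1 else 0)
      = if v a = v b then 1 else 0 := by
  have h : ∀ x : B, (if v a = x then (1:ℝ) else 0) * (if v b = x then 1 else 0)
      = if v a = x then (if v b = x then (1:ℝ) else 0) else 0 := by
    intro x; split_ifs <;> ring
  rw [Finset.sum_congr rfl fun x _ => h x, Finset.sum_ite_eq]
  simp [eq_comm]

lemma expect_count_sq (hn : 0 < n) {P : A → ℝ} (hP : IsPmf P) (v : A → B)
    (hB : 0 < Fintype.card B)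
    (hv : ∀ x, (∑ a, P a * (if v a = x then 1 else 0)) = (Fintype.card B : ℝ)⁻¹) :
    expectIID P (fun z : Fin n → A => ∑ x : B, ((∑ k, if v (z k) = x then (1:ℝ) else 0) / n) ^ 2)
      ≤ 1 / n + (Fintype.card B : ℝ)⁻¹ := by
  have hnR : (0:ℝ) < n := by exact_mod_cast hn
  have hcB : (0:ℝ) < (Fintype.card B : ℝ) := by exact_mod_cast hB
  -- pointwise rewrite
  have hpt : ∀ z : Fin n → A,
      (∑ x : B, ((∑ k, if v (z k) = x then (1:ℝ) else 0) / n) ^ 2)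
      = ((n:ℝ)^2)⁻¹ * ∑ k : Fin n, ∑ l : Fin n, (if v (z k) = v (z l) then (1:ℝ) else 0) := by
    intro z
    have : ∀ x : B, ((∑ k, if v (z k) = x then (1:ℝ) else 0) / n) ^ 2
        = ((n:ℝ)^2)⁻¹ * ∑ k : Fin n, ∑ l : Fin n,
            (if v (z k) = x then (1:ℝ) else 0) * (if v (z l) = x then 1 else 0) := by
      intro x
      rw [div_pow, sq, Finset.sum_mul_sum]
      field_simp
    rw [Finset.sum_congr rfl fun x _ => this x, ← Finset.mul_sum]
    congr 1
    rw [Finset.sum_comm]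
    refine Finset.sum_congr rfl fun k _ => ?_
    rw [Finset.sum_comm]
    exact Finset.sum_congr rfl fun l _ => sum_indicator_pair v (z k) (z l)
  have hrw : expectIID P (fun z : Fin n → A => ∑ x : B, ((∑ k, if v (z k) = x then (1:ℝ) else 0) / n) ^ 2)
      = ((n:ℝ)^2)⁻¹ * ∑ k : Fin n, ∑ l : Fin n,
          expectIID P (fun z => if v (z k) = v (z l) then (1:ℝ) else 0) := by
    have : (fun z : Fin n → A => ∑ x : B, ((∑ k, if v (z k) = x then (1:ℝ) else 0) / n) ^ 2)
        = fun z => ((n:ℝ)^2)⁻¹ * ∑ k : Fin n, ∑ l : Fin n, (if v (z k) = v (z l) then (1:ℝ) else 0) :=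
      funext hpt
    rw [this, expect_const_mul]
    congr 1
    rw [expect_sum (f := fun k z => ∑ l : Fin n, (if v (z k) = v (z l) then (1:ℝ) else 0))]
    exact Finset.sum_congr rfl fun k _ =>
      expect_sum (f := fun l z => (if v (z k) = v (z l) then (1:ℝ) else 0))
  rw [hrw]
  have hkl : ∀ k l : Fin n, expectIID P (fun z => if v (z k) = v (z l) then (1:ℝ) else 0)
      ≤ (if k = l then (1:ℝ) else 0) + (Fintype.card B : ℝ)⁻¹ := by
    intro k l
    by_cases hkl : k = l
    · subst hkl
      have : (fun z : Fin n → A => if v (z k) = v (z k) then (1:ℝ) else 0)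
          = fun _ : Fin n → A => (1:ℝ) := by funext z; simp
      rw [this, expect_const hP.2]
      simp
    · have hdec : (fun z : Fin n → A => if v (z k) = v (z l) then (1:ℝ) else 0)
          = fun z : Fin n → A => ∑ x : B,
              (fun a => if v a = x then (1:ℝ) else 0) (z k) * (fun a => if v a = x then (1:ℝ) else 0) (z l) := by
        funext z
        exact (sum_indicator_pair v (z k) (z l)).symm
      rw [hdec, expect_sum (f := fun x z =>
        (fun a => if v a = x then (1:ℝ) else 0) (z k) * (fun a => if v a = x then (1:ℝ) else 0) (z l))]
      have : ∀ x : B, expectIID P (fun z =>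
          (fun a => if v a = x then (1:ℝ) else 0) (z k) * (fun a => if v a = x then (1:ℝ) else 0) (z l))
          = ((Fintype.card B : ℝ)⁻¹) ^ 2 := by
        intro x
        rw [expect_pair hP.2 hkl (fun a => if v a = x then (1:ℝ) else 0)
          (fun a => if v a = x then (1:ℝ) else 0)]
        rw [hv x]
        ring
      rw [Finset.sum_congr rfl fun x _ => this x, Finset.sum_const, Finset.card_univ,
        nsmul_eq_mul]
      have : (Fintype.card B : ℝ) * ((Fintype.card B : ℝ)⁻¹) ^ 2 = (Fintype.card B : ℝ)⁻¹ := by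
        field_simp
      rw [this]
      simp [hkl]
  calc ((n:ℝ)^2)⁻¹ * ∑ k : Fin n, ∑ l : Fin n,
          expectIID P (fun z => if v (z k) = v (z l) then (1:ℝ) else 0)
      ≤ ((n:ℝ)^2)⁻¹ * ∑ k : Fin n, ∑ l : Fin n,
          ((if k = l then (1:ℝ) else 0) + (Fintype.card B : ℝ)⁻¹) := by
        refine mul_le_mul_of_nonneg_left ?_ (by positivity)
        exact Finset.sum_le_sum fun k _ => Finset.sum_le_sum fun l _ => hkl k l
    _ = ((n:ℝ)^2)⁻¹ * ((n:ℝ) + (n:ℝ)^2 * (Fintype.card B : ℝ)⁻¹) := by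
        congr 1
        have h1 : ∀ k : Fin n, ∑ l : Fin n, ((if k = l then (1:ℝ) else 0) + (Fintype.card B : ℝ)⁻¹)
            = 1 + n * (Fintype.card B : ℝ)⁻¹ := by
          intro k
          rw [Finset.sum_add_distrib, Finset.sum_ite_eq, Finset.sum_const]
          simp
        rw [Finset.sum_congr rfl fun k _ => h1 k, Finset.sum_const]
        simp
        ring
    _ = 1 / n + (Fintype.card B : ℝ)⁻¹ := by field_simp

end ExpCount


section Unif
variable {S : ℕ}

noncomputable def unif (S : ℕ) : Fin S × Fin S → ℝ := fun _ => ((S : ℝ) ^ 2)⁻¹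

lemma unif_isPmf (hS : 0 < S) : IsPmf (unif S) := by
  have hS' : ((S:ℝ)) ≠ 0 := by positivity
  constructor
  · intro a; unfold unif; positivity
  · unfold unif
    rw [Finset.sum_const, Finset.card_univ, Fintype.card_prod, Fintype.card_fin, nsmul_eq_mul]
    push_cast
    field_simp

lemma entropy_const_inv_sq (hS : 0 < S) :
    entropy (unif S) = 2 * Real.log S := by
  have hS' : ((S:ℝ)) ≠ 0 := by positivity
  unfold entropy unif
  rw [Finset.sum_const, Finset.card_univ, Fintype.card_prod, Fintype.card_fin, nsmul_eq_mul]
  rw [Real.log_inv, Real.log_pow]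
  push_cast
  field_simp

lemma unif_marg1 (hS : 0 < S) (x : Fin S) : ∑ y, unif S (x, y) = (S:ℝ)⁻¹ := by
  have hS' : ((S:ℝ)) ≠ 0 := by positivity
  unfold unif
  rw [Finset.sum_const, Finset.card_univ, Fintype.card_fin, nsmul_eq_mul]
  field_simp

lemma unif_marg2 (hS : 0 < S) (y : Fin S) : ∑ x, unif S (x, y) = (S:ℝ)⁻¹ := by
  have hS' : ((S:ℝ)) ≠ 0 := by positivity
  unfold unif
  rw [Finset.sum_const, Finset.card_univ, Fintype.card_fin, nsmul_eq_mul]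
  field_simp

lemma entropy_const_inv (hS : 0 < S) :
    entropy (fun _ : Fin S => (S:ℝ)⁻¹) = Real.log S := by
  have hS' : ((S:ℝ)) ≠ 0 := by positivity
  unfold entropy
  rw [Finset.sum_const, Finset.card_univ, Fintype.card_fin, nsmul_eq_mul]
  rw [Real.log_inv]
  field_simp

lemma mutualInfo_unif (hS : 0 < S) : mutualInfo (unif S) = 0 := by
  unfold mutualInfo
  have h1 : (fun a : Fin S => ∑ b, unif S (a, b)) = fun _ : Fin S => (S:ℝ)⁻¹ :=
    funext fun x => unif_marg1 hS x
  have h2 : (fun b : Fin S => ∑ a, unif S (a, b)) = fun _ : Fin S => (S:ℝ)⁻¹ :=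
    funext fun y => unif_marg2 hS y
  rw [h1, h2, entropy_const_inv hS, entropy_const_inv_sq hS]
  ring

lemma unif_hv1 (hS : 0 < S) (x : Fin S) :
    (∑ a : Fin S × Fin S, unif S a * (if a.1 = x then 1 else 0))
      = (Fintype.card (Fin S) : ℝ)⁻¹ := by
  have hS' : ((S:ℝ)) ≠ 0 := by positivity
  rw [Fintype.card_fin]
  rw [Fintype.sum_prod_type]
  unfold unif
  have : ∀ p : Fin S, ∑ q : Fin S, ((S:ℝ)^2)⁻¹ * (if (p, q).1 = x then (1:ℝ) else 0)
      = if p = x then (S:ℝ) * ((S:ℝ)^2)⁻¹ else 0 := by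
    intro p
    simp only
    split_ifs with hp <;> simp [Finset.card_univ] <;> ring
  rw [Finset.sum_congr rfl fun p _ => this p, Finset.sum_ite_eq' Finset.univ x]
  simp
  field_simp

lemma unif_hv2 (hS : 0 < S) (y : Fin S) :
    (∑ a : Fin S × Fin S, unif S a * (if a.2 = y then 1 else 0))
      = (Fintype.card (Fin S) : ℝ)⁻¹ := by
  have hS' : ((S:ℝ)) ≠ 0 := by positivity
  rw [Fintype.card_fin]
  rw [Fintype.sum_prod_type_right]
  unfold unif
  have : ∀ q : Fin S, ∑ p : Fin S, ((S:ℝ)^2)⁻¹ * (if (p, q).2 = y then (1:ℝ) else 0)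
      = if q = y then (S:ℝ) * ((S:ℝ)^2)⁻¹ else 0 := by
    intro q
    simp only
    split_ifs with hq <;> simp [Finset.card_univ] <;> ring
  rw [Finset.sum_congr rfl fun q _ => this q, Finset.sum_ite_eq' Finset.univ y]
  simp
  field_simp

lemma case2_bound {n : ℕ} (hS : 1000 ≤ S) (hn1 : 1 ≤ n)
    (hcs : (n:ℝ) * 100 ≤ (S:ℝ)^2) (hlarge : (S:ℝ) < 10 * n) :
    (1:ℝ)/4 ≤ expectIID (unif S)
      (fun z : Fin n → Fin S × Fin S =>
        (mutualInfo (empDist z) - mutualInfo (unif S)) ^ 2) := by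
  have hS0 : 0 < S := by omega
  have hSR : (0:ℝ) < S := by exact_mod_cast hS0
  have hP := unif_isPmf hS0
  have hn0 : n ≠ 0 := by omega
  have hnR : (0:ℝ) < n := by exact_mod_cast Nat.pos_of_ne_zero hn0
  have hn100 : (100:ℝ) ≤ n := by
    have : (1000:ℝ) ≤ S := by exact_mod_cast hS
    linarith
  -- kill the mutualInfo (unif S) term
  rw [mutualInfo_unif hS0]
  -- notation
  set f : (Fin n → Fin S × Fin S) → ℝ := fun z => mutualInfo (empDist z) with hf
  have hsimp : (fun z : Fin n → Fin S × Fin S => (mutualInfo (empDist z) - 0) ^ 2)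
      = fun z => (f z) ^ 2 := by
    funext z; rw [hf]; ring
  rw [hsimp]
  -- Jensen
  have hjensen := expect_sq_le hP f
  -- lower bound E f
  have hkey : (4:ℝ)/5 ≤ expectIID (unif S) f := by
    -- R and marginal squares
    set R : (Fin n → Fin S × Fin S) → ℝ := fun z =>
      ∑ p : Fin S × Fin S, if 0 < empDist z p
        then (∑ b, empDist z (p.1, b)) * (∑ a, empDist z (a, p.2)) else 0 with hRdef
    set X : (Fin n → Fin S × Fin S) → ℝ := fun z =>
      ∑ x : Fin S, ((∑ k, if (z k).1 = x then (1:ℝ) else 0) / n) ^ 2 with hXdef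
    set Y : (Fin n → Fin S × Fin S) → ℝ := fun z =>
      ∑ y : Fin S, ((∑ k, if (z k).2 = y then (1:ℝ) else 0) / n) ^ 2 with hYdef
    have hpt1 : ∀ z : Fin n → Fin S × Fin S, 1 - R z ≤ f z := by
      intro z
      exact mutualInfo_ge_one_sub (empDist z) (empDist_nonneg z) (sum_empDist hn0 z)
    have hpt2 : ∀ z : Fin n → Fin S × Fin S,
        R z ≤ Real.sqrt n * (X z + Y z) / 2 := by
      intro z
      have := R_bound (Nat.pos_of_ne_zero hn0) (empDist z) (empDist_nonneg z)
        (fun p hp => empDist_atom hn0 z p hp) (sum_empDist hn0 z)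
      have hx : (∑ a, (∑ b, empDist z (a, b)) ^ 2) = X z := by
        rw [hXdef]
        exact Finset.sum_congr rfl fun x _ => by rw [marg1_empDist z x]
      have hy : (∑ b, (∑ a, empDist z (a, b)) ^ 2) = Y z := by
        rw [hYdef]
        exact Finset.sum_congr rfl fun y _ => by rw [marg2_empDist z y]
      rw [hx, hy] at this
      exact this
    -- expectations of X and Y
    have hcard : 0 < Fintype.card (Fin S) := by simp [hS0]
    have hEX : expectIID (unif S) X ≤ 1/n + (S:ℝ)⁻¹ := by
      have := expect_count_sq (Nat.pos_of_ne_zero hn0) hP Prod.fst hcard (unif_hv1 hS0)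
      rw [Fintype.card_fin] at this
      exact this
    have hEY : expectIID (unif S) Y ≤ 1/n + (S:ℝ)⁻¹ := by
      have := expect_count_sq (Nat.pos_of_ne_zero hn0) hP Prod.snd hcard (unif_hv2 hS0)
      rw [Fintype.card_fin] at this
      exact this
    -- numeric facts about sqrt n
    have hsq1 : Real.sqrt n ≤ (S:ℝ)/10 := by
      have h1 : (n:ℝ) ≤ ((S:ℝ)/10)^2 := by nlinarith
      calc Real.sqrt n ≤ Real.sqrt (((S:ℝ)/10)^2) := Real.sqrt_le_sqrt h1
        _ = (S:ℝ)/10 := Real.sqrt_sq (by positivity)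
    have hsq2 : (10:ℝ) ≤ Real.sqrt n := by
      have : ((10:ℝ))^2 ≤ n := by nlinarith
      calc (10:ℝ) = Real.sqrt (10^2) := by
            rw [Real.sqrt_sq]; norm_num
        _ ≤ Real.sqrt n := Real.sqrt_le_sqrt this
    have hsqn : Real.sqrt n * Real.sqrt n = (n:ℝ) := Real.mul_self_sqrt (le_of_lt hnR)
    have hsqpos : (0:ℝ) < Real.sqrt n := by linarith
    -- E R ≤ 1/5
    have hER : expectIID (unif S) R ≤ 1/5 := by
      have h1 : expectIID (unif S) R ≤ expectIID (unif S)
          (fun z => Real.sqrt n / 2 * (X z + Y z)) := by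
        refine expect_mono hP fun z => ?_
        calc R z ≤ Real.sqrt n * (X z + Y z) / 2 := hpt2 z
          _ = Real.sqrt n / 2 * (X z + Y z) := by ring
      have h2 : expectIID (unif S) (fun z => Real.sqrt n / 2 * (X z + Y z))
          = Real.sqrt n / 2 * (expectIID (unif S) X + expectIID (unif S) Y) := by
        rw [expect_const_mul (Real.sqrt n / 2) (fun z => X z + Y z), expect_add X Y]
      have h3 : Real.sqrt n / 2 * (expectIID (unif S) X + expectIID (unif S) Y)
          ≤ Real.sqrt n / 2 * (2 * (1/n + (S:ℝ)⁻¹)) := by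
        refine mul_le_mul_of_nonneg_left ?_ (by positivity)
        linarith
      have h4 : Real.sqrt n / 2 * (2 * (1/n + (S:ℝ)⁻¹)) = Real.sqrt n / n + Real.sqrt n / S := by
        field_simp
      have h5 : Real.sqrt n / n ≤ 1/10 := by
        rw [div_le_div_iff₀ hnR (by norm_num)]
        nlinarith
      have h6 : Real.sqrt n / S ≤ 1/10 := by
        rw [div_le_div_iff₀ hSR (by norm_num)]
        linarith
      calc expectIID (unif S) R ≤ _ := h1
        _ = _ := h2
        _ ≤ Real.sqrt n / 2 * (2 * (1/n + (S:ℝ)⁻¹)) := h3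
        _ = Real.sqrt n / n + Real.sqrt n / S := h4
        _ ≤ 1/5 := by linarith
    -- combine
    have hEf : 1 - expectIID (unif S) R ≤ expectIID (unif S) f := by
      have h1 : expectIID (unif S) (fun z => 1 - R z) ≤ expectIID (unif S) f :=
        expect_mono hP hpt1
      have h2 : expectIID (unif S) (fun z => 1 - R z)
          = 1 - expectIID (unif S) R := by
        rw [expect_sub (fun _ => (1:ℝ)) R, expect_const hP.2]
      linarith
    linarith
  -- finish: E[f^2] ≥ (E f)^2 ≥ (4/5)^2 ≥ 1/4
  have h1 : ((4:ℝ)/5)^2 ≤ (expectIID (unif S) f)^2 := by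
    have h0 : (0:ℝ) ≤ 4/5 := by norm_num
    nlinarith
  have : ((4:ℝ)/5)^2 = 16/25 := by norm_num
  linarith [hjensen, h1]

end Unif


section Diag
variable {S : ℕ}

noncomputable def diagP (S : ℕ) : Fin S × Fin S → ℝ :=
  fun p => if p.1 = p.2 then (S:ℝ)⁻¹ else 0

lemma diagP_isPmf (hS : 0 < S) : IsPmf (diagP S) := by
  have hS' : ((S:ℝ)) ≠ 0 := by positivity
  constructor
  · intro a
    unfold diagP
    split_ifs <;> positivity
  · unfold diagP
    rw [Fintype.sum_prod_type]
    have : ∀ x : Fin S, ∑ y : Fin S, (if (x, y).1 = (x, y).2 then (S:ℝ)⁻¹ else 0) = (S:ℝ)⁻¹ := by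
      intro x
      simp only
      rw [Finset.sum_ite_eq Finset.univ x (fun _ => (S:ℝ)⁻¹)]
      simp
    rw [Finset.sum_congr rfl fun x _ => this x, Finset.sum_const, Finset.card_univ,
      Fintype.card_fin, nsmul_eq_mul]
    field_simp

lemma diagP_marg1 (hS : 0 < S) (x : Fin S) : ∑ y, diagP S (x, y) = (S:ℝ)⁻¹ := by
  unfold diagP
  simp only
  rw [Finset.sum_ite_eq Finset.univ x (fun _ => (S:ℝ)⁻¹)]
  simp

lemma diagP_marg2 (hS : 0 < S) (y : Fin S) : ∑ x, diagP S (x, y) = (S:ℝ)⁻¹ := by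
  unfold diagP
  simp only
  rw [Finset.sum_ite_eq' Finset.univ y (fun _ => (S:ℝ)⁻¹)]
  simp

lemma entropy_diagP (hS : 0 < S) : entropy (diagP S) = Real.log S := by
  unfold entropy diagP
  rw [Fintype.sum_prod_type]
  have : ∀ x : Fin S, ∑ y : Fin S,
      -((if (x, y).1 = (x, y).2 then (S:ℝ)⁻¹ else 0)
        * Real.log (if (x, y).1 = (x, y).2 then (S:ℝ)⁻¹ else 0))
      = -((S:ℝ)⁻¹ * Real.log ((S:ℝ)⁻¹)) := by
    intro x
    simp only
    have : ∀ y : Fin S, -((if x = y then (S:ℝ)⁻¹ else 0)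
        * Real.log (if x = y then (S:ℝ)⁻¹ else 0))
        = if x = y then -((S:ℝ)⁻¹ * Real.log ((S:ℝ)⁻¹)) else 0 := by
      intro y; split_ifs <;> simp
    rw [Finset.sum_congr rfl fun y _ => this y,
      Finset.sum_ite_eq Finset.univ x (fun _ => -((S:ℝ)⁻¹ * Real.log ((S:ℝ)⁻¹)))]
    simp
  rw [Finset.sum_congr rfl fun x _ => this x, Finset.sum_const, Finset.card_univ,
    Fintype.card_fin, nsmul_eq_mul, Real.log_inv]
  have hS' : ((S:ℝ)) ≠ 0 := by positivity
  field_simp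

lemma mutualInfo_diagP (hS : 0 < S) : mutualInfo (diagP S) = Real.log S := by
  unfold mutualInfo
  have h1 : (fun a : Fin S => ∑ b, diagP S (a, b)) = fun _ : Fin S => (S:ℝ)⁻¹ :=
    funext fun x => diagP_marg1 hS x
  have h2 : (fun b : Fin S => ∑ a, diagP S (a, b)) = fun _ : Fin S => (S:ℝ)⁻¹ :=
    funext fun y => diagP_marg2 hS y
  rw [h1, h2, entropy_const_inv hS, entropy_diagP hS]
  ring

/-- If all samples lie on the diagonal, the empirical distribution vanishes off the
diagonal. -/
lemma empDist_offdiag {n : ℕ} (z : Fin n → Fin S × Fin S)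
    (hz : ∀ k, (z k).1 = (z k).2) {x y : Fin S} (hxy : x ≠ y) :
    empDist z (x, y) = 0 := by
  unfold empDist
  have : ∀ k : Fin n, (if z k = (x, y) then (1:ℝ) else 0) = 0 := by
    intro k
    rw [if_neg]
    intro h
    apply hxy
    have h1 := congrArg Prod.fst h
    have h2 := congrArg Prod.snd h
    simp at h1 h2
    rw [← h1, ← h2]
    exact hz k
  rw [Finset.sum_congr rfl fun k _ => this k]
  simp

lemma mutualInfo_empDist_diag {n : ℕ} (z : Fin n → Fin S × Fin S)
    (hz : ∀ k, (z k).1 = (z k).2) :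
    mutualInfo (empDist z) = entropy (fun x : Fin S => empDist z (x, x)) := by
  have h1 : (fun a : Fin S => ∑ b, empDist z (a, b)) = fun x : Fin S => empDist z (x, x) := by
    funext x
    exact Finset.sum_eq_single x (fun y _ hy => empDist_offdiag z hz (Ne.symm hy))
      (fun h => absurd (Finset.mem_univ x) h)
  have h2 : (fun b : Fin S => ∑ a, empDist z (a, b)) = fun y : Fin S => empDist z (y, y) := by
    funext y
    exact Finset.sum_eq_single y (fun x _ hx => empDist_offdiag z hz hx)
      (fun h => absurd (Finset.mem_univ y) h)
  have h3 : entropy (empDist z) = entropy (fun x : Fin S => empDist z (x, x)) := by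
    unfold entropy
    rw [Fintype.sum_prod_type]
    refine Finset.sum_congr rfl fun x _ => ?_
    refine Finset.sum_eq_single x (fun y _ hy => ?_) (fun h => absurd (Finset.mem_univ x) h)
    rw [empDist_offdiag z hz (Ne.symm hy)]
    simp
  unfold mutualInfo
  rw [h1, h2, h3]
  ring

/-- Entropy of an empirical count distribution is at most `log n`. -/
lemma entropy_counts_le_log {B : Type*} [Fintype B] {n : ℕ} (hn : 0 < n) (m : B → ℕ)
    (hm : ∑ x, (m x : ℝ) = n) :
    entropy (fun x : B => (m x : ℝ) / n) ≤ Real.log n := by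
  have hnR : (0:ℝ) < n := by exact_mod_cast hn
  unfold entropy
  have key : ∀ x : B, -((m x : ℝ) / n * Real.log ((m x : ℝ) / n))
      = (m x : ℝ) / n * Real.log n - (m x : ℝ) / n * Real.log (m x) := by
    intro x
    rcases Nat.eq_zero_or_pos (m x) with h0 | hpos
    · simp [h0]
    · have hmR : (0:ℝ) < (m x : ℝ) := by exact_mod_cast hpos
      rw [Real.log_div (ne_of_gt hmR) (ne_of_gt hnR)]
      ring
  rw [Finset.sum_congr rfl fun x _ => key x, Finset.sum_sub_distrib]
  have h1 : ∑ x : B, (m x : ℝ) / n * Real.log n = Real.log n := by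
    rw [← Finset.sum_mul, ← Finset.sum_div, hm]
    field_simp
  rw [h1]
  have h2 : 0 ≤ ∑ x : B, (m x : ℝ) / n * Real.log (m x) := by
    refine Finset.sum_nonneg fun x _ => ?_
    rcases Nat.eq_zero_or_pos (m x) with h0 | hpos
    · simp [h0]
    · have hmR : (1:ℝ) ≤ (m x : ℝ) := by exact_mod_cast hpos
      have : (0:ℝ) ≤ Real.log (m x) := Real.log_nonneg hmR
      positivity
  linarith

lemma case1_bound {n : ℕ} (hS : 1000 ≤ S) (hn1 : 1 ≤ n) (h10 : 10 * (n:ℝ) ≤ S) :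
    (1:ℝ)/4 ≤ expectIID (diagP S)
      (fun z : Fin n → Fin S × Fin S =>
        (mutualInfo (empDist z) - mutualInfo (diagP S)) ^ 2) := by
  have hS0 : 0 < S := by omega
  have hSR : (0:ℝ) < S := by exact_mod_cast hS0
  have hn0 : n ≠ 0 := by omega
  have hnR : (0:ℝ) < n := by exact_mod_cast Nat.pos_of_ne_zero hn0
  refine expect_ge (diagP_isPmf hS0) fun z hz => ?_
  -- all samples are on the diagonal
  have hdiag : ∀ k, (z k).1 = (z k).2 := by
    intro k
    by_contra hne
    apply hz
    refine Finset.prod_eq_zero (Finset.mem_univ k) ?_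
    unfold diagP
    rw [if_neg hne]
  rw [mutualInfo_diagP hS0, mutualInfo_empDist_diag z hdiag]
  -- the diagonal entropy is at most log n
  set m : Fin S → ℕ := fun x => (Finset.univ.filter fun k => z k = (x, x)).card with hmdef
  have hemp : (fun x : Fin S => empDist z (x, x)) = fun x : Fin S => (m x : ℝ) / n := by
    funext x
    unfold empDist
    rw [hmdef]
    simp only
    rw [Finset.sum_boole]
  have hmsum : ∑ x, (m x : ℝ) = n := by
    rw [hmdef]
    simp only
    have : ∀ x : Fin S, ((Finset.univ.filter fun k => z k = (x, x)).card : ℝ)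
        = ∑ k : Fin n, if z k = (x, x) then (1:ℝ) else 0 := by
      intro x; rw [Finset.sum_boole]
    rw [Finset.sum_congr rfl fun x _ => this x, Finset.sum_comm]
    have : ∀ k : Fin n, ∑ x : Fin S, (if z k = (x, x) then (1:ℝ) else 0) = 1 := by
      intro k
      have hk : z k = ((z k).1, (z k).1) := by
        have := hdiag k
        exact Prod.ext rfl (by rw [← this])
      have : ∀ x : Fin S, (if z k = (x, x) then (1:ℝ) else 0)
          = if (z k).1 = x then (1:ℝ) else 0 := by
        intro x
        congr 1
        rw [hk]
        simp [Prod.ext_iff]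
      rw [Finset.sum_congr rfl fun x _ => this x, Finset.sum_ite_eq Finset.univ (z k).1]
      simp
    rw [Finset.sum_congr rfl fun k _ => this k]
    simp
  have hent : entropy (fun x : Fin S => empDist z (x, x)) ≤ Real.log n := by
    rw [hemp]
    exact entropy_counts_le_log (Nat.pos_of_ne_zero hn0) m hmsum
  -- log S - log n ≥ log 10 ≥ 1
  have hlog10 : (1:ℝ) ≤ Real.log 10 := by
    rw [Real.le_log_iff_exp_le (by norm_num)]
    calc Real.exp 1 ≤ 2.7182818286 := le_of_lt Real.exp_one_lt_d9
      _ ≤ 10 := by norm_num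
  have hmono : Real.log (10 * n) ≤ Real.log S := Real.log_le_log (by positivity) h10
  have hsplit : Real.log (10 * n) = Real.log 10 + Real.log n :=
    Real.log_mul (by norm_num) (ne_of_gt hnR)
  have hgap : entropy (fun x : Fin S => empDist z (x, x)) + 1 ≤ Real.log S := by
    have hlogn : entropy (fun x : Fin S => empDist z (x, x)) ≤ Real.log n := hent
    linarith [hmono, hsplit, hlog10, hlogn]
  nlinarith [hgap]

end Diag


section Bdd

lemma neg_mul_log_mem {p : ℝ} (h0 : 0 ≤ p) (h1 : p ≤ 1) :
    0 ≤ -(p * Real.log p) ∧ -(p * Real.log p) ≤ 1 := by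
  rcases eq_or_lt_of_le h0 with h | h
  · simp [← h]
  · constructor
    · have : Real.log p ≤ 0 := Real.log_nonpos h0 h1
      nlinarith
    · have hinv : Real.log p⁻¹ ≤ p⁻¹ - 1 := Real.log_le_sub_one_of_pos (by positivity)
      rw [Real.log_inv] at hinv
      have hmul := mul_le_mul_of_nonneg_left hinv (le_of_lt h)
      have hp : p * (p⁻¹ - 1) = 1 - p := by field_simp
      nlinarith

lemma entropy_bounds {B : Type*} [Fintype B] {q : B → ℝ} (h0 : ∀ b, 0 ≤ q b)
    (h1 : ∀ b, q b ≤ 1) :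
    0 ≤ entropy q ∧ entropy q ≤ Fintype.card B := by
  constructor
  · exact Finset.sum_nonneg fun b _ => (neg_mul_log_mem (h0 b) (h1 b)).1
  · calc entropy q ≤ ∑ _b : B, (1:ℝ) :=
        Finset.sum_le_sum fun b _ => (neg_mul_log_mem (h0 b) (h1 b)).2
      _ = Fintype.card B := by simp

lemma mutualInfo_abs_le {S : ℕ} {q : Fin S × Fin S → ℝ} (hq : IsPmf q) :
    |mutualInfo q| ≤ (S:ℝ) + S + S * S := by
  have hle1 : ∀ p, q p ≤ 1 := fun p => by
    rw [← hq.2]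
    exact Finset.single_le_sum (fun a _ => hq.1 a) (Finset.mem_univ p)
  have hm1n : ∀ x : Fin S, 0 ≤ ∑ y, q (x, y) :=
    fun x => Finset.sum_nonneg fun y _ => hq.1 _
  have hm2n : ∀ y : Fin S, 0 ≤ ∑ x, q (x, y) :=
    fun y => Finset.sum_nonneg fun x _ => hq.1 _
  have htot : ∑ x : Fin S, ∑ y : Fin S, q (x, y) = 1 := by
    rw [← Fintype.sum_prod_type, hq.2]
  have htot' : ∑ y : Fin S, ∑ x : Fin S, q (x, y) = 1 := by
    rw [Finset.sum_comm, htot]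
  have hm1le : ∀ x : Fin S, ∑ y, q (x, y) ≤ 1 := by
    intro x
    rw [← htot]
    exact Finset.single_le_sum (f := fun x => ∑ y, q (x, y)) (fun a _ => hm1n a)
      (Finset.mem_univ x)
  have hm2le : ∀ y : Fin S, ∑ x, q (x, y) ≤ 1 := by
    intro y
    rw [← htot']
    exact Finset.single_le_sum (f := fun y => ∑ x, q (x, y)) (fun a _ => hm2n a)
      (Finset.mem_univ y)
  have h1 := entropy_bounds (q := fun x : Fin S => ∑ y, q (x, y)) hm1n hm1le
  have h2 := entropy_bounds (q := fun y : Fin S => ∑ x, q (x, y)) hm2n hm2le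
  have h3 := entropy_bounds (q := q) hq.1 hle1
  rw [Fintype.card_fin] at h1 h2
  rw [Fintype.card_prod, Fintype.card_fin] at h3
  unfold mutualInfo
  rw [abs_le]
  push_cast at h3
  constructor <;> [nlinarith [h1.1, h1.2, h2.1, h2.2, h3.1, h3.2];
    nlinarith [h1.1, h1.2, h2.1, h2.2, h3.1, h3.2]]

lemma empDist_isPmf {A : Type*} [Fintype A] [DecidableEq A] {n : ℕ} (hn : n ≠ 0)
    (z : Fin n → A) : IsPmf (empDist z) :=
  ⟨empDist_nonneg z, sum_empDist hn z⟩

lemma range_bdd (S n : ℕ) (hn : n ≠ 0) :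
    BddAbove (Set.range fun P : {P : Fin S × Fin S → ℝ // IsPmf P} =>
      expectIID P.1 (fun z : Fin n → Fin S × Fin S =>
        (mutualInfo (empDist z) - mutualInfo P.1) ^ 2)) := by
  refine ⟨(2 * ((S:ℝ) + S + S * S)) ^ 2, ?_⟩
  rintro x ⟨P, rfl⟩
  refine expect_le P.2 fun z => ?_
  have h1 := mutualInfo_abs_le (empDist_isPmf hn z)
  have h2 := mutualInfo_abs_le P.2
  rw [abs_le] at h1 h2
  nlinarith [h1.1, h1.2, h2.1, h2.2]

end Bdd




/-- Plug-in converse: there exist `c > 0`, `ε₀ > 0` and `S₀` such that for all `S ≥ S₀` and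
all sample sizes `n ≥ 1` with `n ≤ c S²`, the empirical (plug-in) mutual information
`I(P̂_n)` has worst-case mean squared error at least `ε₀` over all joint pmfs on
`[S] × [S]`; i.e. the worst-case sample complexity required for the empirical mutual
information to be consistent is `Ω(S²)`. -/
theorem empirical_mutualInfo_converse :
    ∃ c > (0 : ℝ), ∃ ε₀ > (0 : ℝ), ∃ S₀ : ℕ, ∀ S n : ℕ, S₀ ≤ S → 1 ≤ n →
      (n : ℝ) ≤ c * (S : ℝ) ^ 2 →
      ε₀ ≤ ⨆ P : {P : Fin S × Fin S → ℝ // IsPmf P},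
        expectIID P.1
          (fun z : Fin n → Fin S × Fin S =>
            (mutualInfo (empDist z) - mutualInfo P.1) ^ 2) := by
  refine ⟨1/100, by norm_num, 1/4, by norm_num, 1000, ?_⟩
  intro S n hS hn1 hc
  have hS0 : 0 < S := by omega
  have hn0 : n ≠ 0 := by omega
  have hbdd := range_bdd S n hn0
  rcases le_or_gt (10 * (n:ℝ)) (S:ℝ) with hcase | hcase
  · calc (1:ℝ)/4 ≤ expectIID (diagP S)
          (fun z : Fin n → Fin S × Fin S =>
            (mutualInfo (empDist z) - mutualInfo (diagP S)) ^ 2) :=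
        case1_bound hS hn1 hcase
      _ ≤ _ := le_ciSup hbdd ⟨diagP S, diagP_isPmf hS0⟩
  · have hcs : (n:ℝ) * 100 ≤ (S:ℝ)^2 := by linarith
    calc (1:ℝ)/4 ≤ expectIID (unif S)
          (fun z : Fin n → Fin S × Fin S =>
            (mutualInfo (empDist z) - mutualInfo (unif S)) ^ 2) :=
        case2_bound hS hn1 hcs hcase
      _ ≤ _ := le_ciSup hbdd ⟨unif S, unif_isPmf hS0⟩
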